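/- For every positive integer m and every complex number s, the Gauss–Legendre multiplication formula holds: Γ(s) = m^{s−1/2} · (2π)^{(1−m)/2} · ∏_{k=0}^{m−1} Γ((s+k)/m). -/

import Mathlib

open Filter Finset Complex Topology Real

lemma abs_one_sub_exp (θ : ℝ) :
    ‖(1 - Complex.exp (θ * Complex.I))‖ = 2 * |Real.sin (θ / 2)| := by
  have e1 : cexp ((θ:ℂ)/2*Complex.I) * cexp (-((θ:ℂ)/2)*Complex.I) = 1 := by
    rw [← Complex.exp_add]; ring_nf; exact Complex.exp_zero
  have e2 : cexp ((θ:ℂ)/2*Complex.I) * cexp ((θ:ℂ)/2*Complex.I) = cexp ((θ:ℂ)*Complex.I) := by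
    rw [← Complex.exp_add]; ring_nf
  have h : (1 : ℂ) - Complex.exp (θ * Complex.I) =
      Complex.exp ((θ/2 : ℝ) * Complex.I) *
        (Complex.sin (((θ/2 : ℝ) : ℂ)) * 2 * (-Complex.I)) := by
    rw [Complex.sin]
    push_cast
    linear_combination (-(1:ℂ)) * e1 + e2 +
      (cexp ((θ:ℂ)/2*Complex.I) * (cexp (-((θ:ℂ)/2)*Complex.I) - cexp ((θ:ℂ)/2*Complex.I))) *
        Complex.I_mul_I
  rw [h, norm_mul, Complex.norm_exp_ofReal_mul_I, one_mul, norm_mul, norm_mul,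
    ← Complex.ofReal_sin, Complex.norm_real]
  simp [mul_comm]

lemma sin_prod (m : ℕ) (hm : 1 ≤ m) :
    ∏ j ∈ Finset.range (m - 1), (2 * Real.sin (π * (j + 1) / m)) = m := by
  obtain ⟨n, rfl⟩ : ∃ n, m = n + 1 := ⟨m - 1, (Nat.succ_pred_eq_of_pos hm).symm⟩
  have hprim := Complex.isPrimitiveRoot_exp (n + 1) (Nat.succ_ne_zero n)
  have key := hprim.prod_one_sub_pow_eq_order
  have habs := congrArg (fun z : ℂ => ‖z‖) key
  rw [norm_prod] at habs
  rw [show ((n:ℂ) + 1) = ((n + 1 : ℕ) : ℂ) by push_cast; ring, Complex.norm_natCast] at habs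
  simp only [Nat.add_sub_cancel]
  have hfac : ∀ k ∈ Finset.range n,
      ‖(1 - Complex.exp (2 * ↑π * Complex.I / ↑(n + 1)) ^ (k + 1))‖ =
        2 * Real.sin (π * (k + 1) / (n + 1)) := by
    intro k hk
    rw [Finset.mem_range] at hk
    rw [← Complex.exp_nat_mul]
    have harg : ((k + 1 : ℕ) : ℂ) * (2 * ↑π * Complex.I / ((n + 1 : ℕ) : ℂ)) =
        ((2 * π * (k + 1) / (n + 1) : ℝ) : ℂ) * Complex.I := by
      push_cast
      field_simp
    rw [harg, abs_one_sub_exp]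
    have hx : 2 * π * (↑k + 1) / (↑n + 1) / 2 = π * (↑k + 1) / (↑n + 1) := by ring
    rw [hx, abs_of_pos]
    · apply Real.sin_pos_of_pos_of_lt_pi
      · positivity
      · rw [div_lt_iff₀ (by positivity)]
        have : (k:ℝ) + 1 < n + 1 := by exact_mod_cast Nat.succ_lt_succ hk
        nlinarith [Real.pi_pos]
  rw [Finset.prod_congr rfl hfac] at habs
  push_cast at habs ⊢
  exact habs

lemma gamma_prod (m : ℕ) (hm : 1 ≤ m) :
    ∏ k ∈ Finset.range m, Real.Gamma ((1 + k) / m) = Real.sqrt ((2 * π) ^ (m - 1) / m) := by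
  set p : ℝ := ∏ j ∈ Finset.range (m - 1), Real.Gamma ((j + 1) / m) with hp
  have hm0 : (0:ℝ) < m := by exact_mod_cast hm
  have hLHS : ∏ k ∈ Finset.range m, Real.Gamma ((1 + k) / m) = p := by
    obtain ⟨n, rfl⟩ : ∃ n, m = n + 1 := ⟨m - 1, (Nat.succ_pred_eq_of_pos hm).symm⟩
    rw [Finset.prod_range_succ]
    simp only [Nat.add_sub_cancel, hp]
    rw [show ((1:ℝ) + n) / (n + 1 : ℕ) = 1 by push_cast; field_simp; ring, Real.Gamma_one, mul_one]
    refine Finset.prod_congr rfl fun j hj => ?_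
    congr 1
    push_cast
    ring
  have hrefl : p * p = ∏ j ∈ Finset.range (m - 1), (π / Real.sin (π * ((j + 1) / m))) := by
    nth_rewrite 2 [hp]
    rw [← Finset.prod_range_reflect (fun j => Real.Gamma ((j + 1) / m)) (m - 1)]
    rw [hp, ← Finset.prod_mul_distrib]
    refine Finset.prod_congr rfl fun j hj => ?_
    rw [Finset.mem_range] at hj
    have h1 : ((m - 1 - 1 - j : ℕ) : ℝ) + 1 = m - 1 - j := by
      have : m - 1 - 1 - j = m - (2 + j) := by omega
      rw [this, Nat.cast_sub (by omega)]
      push_cast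
      ring
    rw [h1, show ((m:ℝ) - 1 - j) / m = 1 - (j + 1) / m by field_simp; ring]
    exact Real.Gamma_mul_Gamma_one_sub _
  have hsin : ∏ j ∈ Finset.range (m - 1), Real.sin (π * ((j + 1) / m)) = m / 2 ^ (m - 1) := by
    have h2 := sin_prod m hm
    rw [Finset.prod_mul_distrib, Finset.prod_const, Finset.card_range] at h2
    have h3 : ∀ j : ℕ, π * ((j + 1) / m) = π * (j + 1) / m := fun j => by ring
    simp only [h3]
    field_simp at h2 ⊢
    linarith
  have hp2 : p * p = (2 * π) ^ (m - 1) / m := by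
    rw [hrefl, Finset.prod_div_distrib, Finset.prod_const, Finset.card_range, hsin]
    rw [mul_pow, div_div_eq_mul_div]
    ring
  have hppos : 0 ≤ p := Finset.prod_nonneg fun j _ =>
    (Real.Gamma_pos_of_pos (by positivity)).le
  rw [hLHS, ← Real.sqrt_mul_self hppos, hp2]

lemma my_cpow_sum {ι : Type*} {x : ℂ} (hx : x ≠ 0) (t : Finset ι) (f : ι → ℂ) :
    x ^ (∑ i ∈ t, f i) = ∏ i ∈ t, x ^ f i := by
  classical
  induction t using Finset.induction_on with
  | empty => simp [Complex.cpow_zero]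
  | insert _ _ h ih =>
    rw [Finset.sum_insert h, Finset.prod_insert h, Complex.cpow_add _ _ hx, ih]

lemma exp_sum_eq (m : ℕ) (hm : 1 ≤ m) (s : ℂ) :
    ∑ k ∈ Finset.range m, (s + (k : ℂ)) / m = s + ((m : ℂ) - 1) / 2 := by
  have hmc : (m : ℂ) ≠ 0 := Nat.cast_ne_zero.mpr (by omega)
  have hsum : (∑ k ∈ Finset.range m, (k : ℂ)) * 2 = m * (m - 1) := by
    have h := Finset.sum_range_id_mul_two m
    have := congrArg (Nat.cast : ℕ → ℂ) h
    push_cast at this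
    rw [this, Nat.cast_sub hm]
    push_cast
    ring
  rw [← Finset.sum_div, Finset.sum_add_distrib, Finset.sum_const, Finset.card_range]
  field_simp
  linear_combination hsum

lemma denom_reindex (m n : ℕ) (hm : 1 ≤ m) (s : ℂ) :
    ∏ k ∈ Finset.range m, ∏ j ∈ Finset.range (n + 1), (s + ((k + m * j : ℕ) : ℂ)) =
      ∏ i ∈ Finset.range (m * (n + 1)), (s + (i : ℂ)) := by
  rw [← Finset.prod_product' (Finset.range m) (Finset.range (n + 1))
    (fun k j => (s + ((k + m * j : ℕ) : ℂ)))]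
  refine Finset.prod_nbij' (fun p => p.1 + m * p.2) (fun i => (i % m, i / m)) ?_ ?_ ?_ ?_ ?_
  · rintro ⟨k, j⟩ hp
    simp only [Finset.mem_product, Finset.mem_range] at hp ⊢
    obtain ⟨h1, h2⟩ := hp
    calc k + m * j < m + m * j := by omega
      _ = m * (j + 1) := by ring
      _ ≤ m * (n + 1) := Nat.mul_le_mul_left m (by omega)
  · intro i hi
    simp only [Finset.mem_range] at hi
    simp only [Finset.mem_product, Finset.mem_range]
    exact ⟨Nat.mod_lt _ (by omega), Nat.div_lt_iff_lt_mul (by omega) |>.mpr (by linarith [hi])⟩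
  · rintro ⟨k, j⟩ hp
    simp only [Finset.mem_product, Finset.mem_range] at hp
    obtain ⟨h1, h2⟩ := hp
    simp [Nat.add_mul_mod_self_left, Nat.mod_eq_of_lt h1, Nat.add_mul_div_left _ _ (by omega : 0 < m),
      Nat.div_eq_of_lt h1]
  · intro i _
    exact Nat.mod_add_div i m
  · rintro ⟨k, j⟩ _
    rfl

lemma key_identity (m : ℕ) (hm : 1 ≤ m) (s : ℂ) (hs : ∀ n : ℕ, s ≠ -(n : ℂ))
    (n : ℕ) (hn : 1 ≤ n) :
    ∏ k ∈ Finset.range m, Complex.GammaSeq ((s + (k : ℂ)) / m) n =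
      Complex.GammaSeq s (m * n + m - 1) *
        ((n : ℂ) ^ (s + ((m : ℂ) - 1) / 2) * ((Nat.factorial n : ℕ) : ℂ) ^ m * (m : ℂ) ^ (m * (n + 1)) /
          (((m * n + m - 1 : ℕ) : ℂ) ^ s * ((Nat.factorial (m * n + m - 1) : ℕ) : ℂ))) := by
  have hmc : (m : ℂ) ≠ 0 := Nat.cast_ne_zero.mpr (by omega)
  have hnc : (n : ℂ) ≠ 0 := Nat.cast_ne_zero.mpr (by omega)
  set N := m * n + m - 1 with hN
  have hmn : 1 ≤ m * n := Nat.one_le_iff_ne_zero.mpr (Nat.mul_ne_zero (by omega) (by omega))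
  have hN1 : N + 1 = m * (n + 1) := by rw [hN, Nat.mul_add, Nat.mul_one]; omega
  have hPi : ∏ i ∈ Finset.range (m * (n + 1)), (s + (i : ℂ)) ≠ 0 := by
    rw [Finset.prod_ne_zero_iff]
    intro i _ h
    exact hs i (by linear_combination h)
  simp only [Complex.GammaSeq]
  have hstep : ∀ k ∈ Finset.range m,
      ∏ j ∈ Finset.range (n + 1), ((s + (k : ℂ)) / m + j) =
        (∏ j ∈ Finset.range (n + 1), (s + ((k + m * j : ℕ) : ℂ))) / (m : ℂ) ^ (n + 1) := by
    intro k _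
    rw [show ((m : ℂ) ^ (n + 1)) = ∏ _j ∈ Finset.range (n + 1), (m : ℂ) by
      rw [Finset.prod_const, Finset.card_range], ← Finset.prod_div_distrib]
    refine Finset.prod_congr rfl fun j _ => ?_
    push_cast
    field_simp
    ring
  rw [Finset.prod_div_distrib, Finset.prod_mul_distrib, Finset.prod_const, Finset.card_range,
    ← my_cpow_sum hnc, exp_sum_eq m hm s, Finset.prod_congr rfl hstep,
    Finset.prod_div_distrib, denom_reindex m n hm s, Finset.prod_const, Finset.card_range,
    ← pow_mul, hN1]
  have hNs : ((N : ℕ) : ℂ) ^ s ≠ 0 := by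
    rw [Ne, Complex.cpow_eq_zero_iff]
    push_neg
    intro h
    exact absurd h (Nat.cast_ne_zero.mpr (by omega))
  have hNf : ((Nat.factorial N : ℕ) : ℂ) ≠ 0 := Nat.cast_ne_zero.mpr (Nat.factorial_ne_zero N)
  have hmp : ((m : ℂ)) ^ (m * (n + 1)) ≠ 0 := pow_ne_zero _ hmc
  field_simp
  ring

noncomputable def uu (m n : ℕ) : ℝ := ((n * m : ℕ) : ℝ) / ((m * n + m - 1 : ℕ) : ℝ)

noncomputable def WW (m n : ℕ) : ℂ :=
  (n : ℂ) ^ (((m : ℂ) - 1) / 2) * ((Nat.factorial n : ℕ) : ℂ) ^ m * (m : ℂ) ^ (m * (n + 1)) /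
    ((Nat.factorial (m * n + m - 1) : ℕ) : ℂ)

lemma uu_tendsto (m : ℕ) (hm : 1 ≤ m) : Tendsto (uu m) atTop (𝓝 1) := by
  have h1 := tendsto_natCast_div_add_atTop (𝕜 := ℝ) ((m : ℝ) - 1)
  have h2 : Tendsto (fun n : ℕ => n * m) atTop atTop :=
    tendsto_atTop_mono (fun n => Nat.le_mul_of_pos_right n (by omega)) tendsto_id
  have h3 := h1.comp h2
  refine h3.congr fun n => ?_
  simp only [Function.comp_apply, uu]
  congr 1
  have hle : 1 ≤ m * n + m := by omega
  rw [Nat.cast_sub hle]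
  push_cast
  ring

lemma uu_cpow_tendsto (m : ℕ) (hm : 1 ≤ m) (s : ℂ) :
    Tendsto (fun n => ((uu m n : ℝ) : ℂ) ^ s) atTop (𝓝 1) := by
  have hc : Tendsto (fun n => ((uu m n : ℝ) : ℂ)) atTop (𝓝 (1 : ℂ)) := by
    have := (Complex.continuous_ofReal.tendsto 1).comp (uu_tendsto m hm)
    simpa [Function.comp_def] using this
  have := hc.cpow (tendsto_const_nhds (x := s)) (by simp [Complex.mem_slitPlane_iff])
  simpa using this

lemma uu_pos (m n : ℕ) (hm : 1 ≤ m) (hn : 1 ≤ n) : 0 < uu m n := by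
  have h1 : 0 < n * m := by positivity
  have h2 : 0 < m * n + m - 1 := by
    have : 1 ≤ m * n := Nat.one_le_iff_ne_zero.mpr (Nat.mul_ne_zero (by omega) (by omega))
    omega
  exact div_pos (by exact_mod_cast h1) (by exact_mod_cast h2)

lemma factor_eq (m n : ℕ) (hm : 1 ≤ m) (hn : 1 ≤ n) (s : ℂ) :
    (n : ℂ) ^ (s + ((m : ℂ) - 1) / 2) * ((Nat.factorial n : ℕ) : ℂ) ^ m *
        (m : ℂ) ^ (m * (n + 1)) /
      (((m * n + m - 1 : ℕ) : ℂ) ^ s * ((Nat.factorial (m * n + m - 1) : ℕ) : ℂ)) =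
    (m : ℂ) ^ (-s) * ((uu m n : ℝ) : ℂ) ^ s * WW m n := by
  have hmn : 1 ≤ m * n := Nat.one_le_iff_ne_zero.mpr (Nat.mul_ne_zero (by omega) (by omega))
  have hN : 1 ≤ m * n + m - 1 := by omega
  have hnc : (n : ℂ) ≠ 0 := Nat.cast_ne_zero.mpr (by omega)
  have hmc : (m : ℂ) ≠ 0 := Nat.cast_ne_zero.mpr (by omega)
  have hNcR : ((m * n + m - 1 : ℕ) : ℝ) ≠ 0 := Nat.cast_ne_zero.mpr (by omega)
  have hu_mul : ((uu m n : ℝ) : ℂ) ^ s * (((m * n + m - 1 : ℕ) : ℂ)) ^ s =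
      (n : ℂ) ^ s * (m : ℂ) ^ s := by
    rw [show (((m * n + m - 1 : ℕ)) : ℂ) = (((m * n + m - 1 : ℕ) : ℝ) : ℂ) from
        (Complex.ofReal_natCast _).symm,
      ← Complex.mul_cpow_ofReal_nonneg (le_of_lt (uu_pos m n hm hn)) (Nat.cast_nonneg _),
      ← Complex.ofReal_mul,
      show uu m n * ((m * n + m - 1 : ℕ) : ℝ) = (n : ℝ) * (m : ℝ) by
        rw [uu, div_mul_cancel₀ _ hNcR]; push_cast; ring]
    rw [Complex.ofReal_mul, Complex.ofReal_natCast, Complex.ofReal_natCast]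
    exact Complex.mul_cpow_ofReal_nonneg (Nat.cast_nonneg n) (Nat.cast_nonneg m) s
  have hsplit : (n : ℂ) ^ (s + ((m : ℂ) - 1) / 2) =
      (n : ℂ) ^ s * (n : ℂ) ^ (((m : ℂ) - 1) / 2) := Complex.cpow_add _ _ hnc
  have hNs : (((m * n + m - 1 : ℕ) : ℂ)) ^ s ≠ 0 := by
    rw [Ne, Complex.cpow_eq_zero_iff]
    push_neg
    intro h
    exact absurd h (Nat.cast_ne_zero.mpr (by omega))
  have hNf : ((Nat.factorial (m * n + m - 1) : ℕ) : ℂ) ≠ 0 :=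
    Nat.cast_ne_zero.mpr (Nat.factorial_ne_zero _)
  have hms : (m : ℂ) ^ s ≠ 0 := by
    rw [Ne, Complex.cpow_eq_zero_iff]
    push_neg
    intro h
    exact absurd h hmc
  have hu : ((uu m n : ℝ) : ℂ) ^ s = (n : ℂ) ^ s * (m : ℂ) ^ s / ((m * n + m - 1 : ℕ) : ℂ) ^ s := by
    rw [eq_div_iff hNs]; exact hu_mul
  rw [hu, hsplit, Complex.cpow_neg, WW]
  field_simp

lemma B_tendsto (m : ℕ) (hm : 1 ≤ m) (s : ℂ) :
    Tendsto (fun n => Complex.GammaSeq s (m * n + m - 1)) atTop (𝓝 (Complex.Gamma s)) :=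
  (Complex.GammaSeq_tendsto_Gamma s).comp (by
    refine tendsto_atTop_mono ?_ tendsto_id
    intro n
    simp only [id_eq]
    have : n ≤ m * n := Nat.le_mul_of_pos_left n (by omega)
    omega)

lemma A_tendsto (m : ℕ) (s : ℂ) :
    Tendsto (fun n => ∏ k ∈ Finset.range m, Complex.GammaSeq ((s + (k : ℂ)) / m) n) atTop
      (𝓝 (∏ k ∈ Finset.range m, Complex.Gamma ((s + (k : ℂ)) / m))) :=
  tendsto_finset_prod _ fun k _ => Complex.GammaSeq_tendsto_Gamma _

lemma ev_id (m : ℕ) (hm : 1 ≤ m) (s : ℂ) (hs : ∀ n : ℕ, s ≠ -(n : ℂ)) :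
    ∀ᶠ n in atTop, ∏ k ∈ Finset.range m, Complex.GammaSeq ((s + (k : ℂ)) / m) n =
      Complex.GammaSeq s (m * n + m - 1) *
        ((m : ℂ) ^ (-s) * ((uu m n : ℝ) : ℂ) ^ s * WW m n) := by
  filter_upwards [eventually_ge_atTop 1] with n hn
  rw [key_identity m hm s hs n hn, factor_eq m n hm hn s]

lemma one_ne_neg_nat : ∀ n : ℕ, (1 : ℂ) ≠ -(n : ℂ) := by
  intro n h
  have := congrArg Complex.re h
  simp at this
  have : (0:ℝ) ≤ (n:ℝ) := Nat.cast_nonneg n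
  linarith

lemma WW_tendsto (m : ℕ) (hm : 1 ≤ m) :
    Tendsto (WW m) atTop
      (𝓝 ((m : ℂ) * ∏ k ∈ Finset.range m, Complex.Gamma (((1 : ℂ) + (k : ℂ)) / m))) := by
  have hmc : (m : ℂ) ≠ 0 := Nat.cast_ne_zero.mpr (by omega)
  have hBne : ∀ n : ℕ, 1 ≤ n → Complex.GammaSeq (1 : ℂ) (m * n + m - 1) ≠ 0 := by
    intro n hn
    rw [Complex.GammaSeq]
    apply div_ne_zero
    · apply mul_ne_zero
      · rw [Ne, Complex.cpow_eq_zero_iff]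
        push_neg
        intro h
        have hmn : 1 ≤ m * n := Nat.one_le_iff_ne_zero.mpr (Nat.mul_ne_zero (by omega) (by omega))
        exact absurd h (Nat.cast_ne_zero.mpr (by omega))
      · exact Nat.cast_ne_zero.mpr (Nat.factorial_ne_zero _)
    · rw [Finset.prod_ne_zero_iff]
      intro j _
      intro h
      have := congrArg Complex.re h
      simp at this
      have : (0:ℝ) ≤ (j:ℝ) := Nat.cast_nonneg j
      linarith
  have hune : ∀ n : ℕ, 1 ≤ n → ((uu m n : ℝ) : ℂ) ^ (1:ℂ) ≠ 0 := by
    intro n hn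
    rw [Complex.cpow_one]
    exact_mod_cast (uu_pos m n hm hn).ne'
  -- limit of the expression
  have hlim : Tendsto (fun n => (∏ k ∈ Finset.range m, Complex.GammaSeq (((1:ℂ) + (k : ℂ)) / m) n) /
      (Complex.GammaSeq (1 : ℂ) (m * n + m - 1) * ((m : ℂ) ^ (-(1:ℂ)) * ((uu m n : ℝ) : ℂ) ^ (1:ℂ))))
      atTop (𝓝 ((∏ k ∈ Finset.range m, Complex.Gamma (((1 : ℂ) + (k : ℂ)) / m)) /
        (Complex.Gamma 1 * ((m : ℂ) ^ (-(1:ℂ)) * 1)))) := by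
    refine Tendsto.div (A_tendsto m 1) ?_ ?_
    · exact (B_tendsto m hm 1).mul (tendsto_const_nhds.mul (uu_cpow_tendsto m hm 1))
    · rw [Complex.Gamma_one, Complex.cpow_neg, Complex.cpow_one]
      simp [hmc]
  have heq : (∏ k ∈ Finset.range m, Complex.Gamma (((1 : ℂ) + (k : ℂ)) / m)) /
        (Complex.Gamma 1 * ((m : ℂ) ^ (-(1:ℂ)) * 1)) =
      (m : ℂ) * ∏ k ∈ Finset.range m, Complex.Gamma (((1 : ℂ) + (k : ℂ)) / m) := by
    rw [Complex.Gamma_one, Complex.cpow_neg, Complex.cpow_one]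
    field_simp
  rw [heq] at hlim
  refine hlim.congr' ?_
  filter_upwards [ev_id m hm 1 one_ne_neg_nat, eventually_ge_atTop 1] with n hid hn
  have h1 := hBne n hn
  have h2 := hune n hn
  have h3 : (m:ℂ) ^ (-(1:ℂ)) ≠ 0 := by
    rw [Complex.cpow_neg, Complex.cpow_one]
    simpa using hmc
  rw [div_eq_iff (mul_ne_zero h1 (mul_ne_zero h3 h2)), hid]
  ring

lemma prod_gamma (m : ℕ) (hm : 1 ≤ m) (s : ℂ) (hs : ∀ n : ℕ, s ≠ -(n : ℂ)) :
    ∏ k ∈ Finset.range m, Complex.Gamma ((s + (k : ℂ)) / m) =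
      Complex.Gamma s * ((m : ℂ) ^ (-s) *
        ((m : ℂ) * ∏ k ∈ Finset.range m, Complex.Gamma (((1 : ℂ) + (k : ℂ)) / m))) := by
  refine tendsto_nhds_unique (A_tendsto m s) ?_
  have h := (B_tendsto m hm s).mul
    ((tendsto_const_nhds (x := (m : ℂ) ^ (-s)).mul (uu_cpow_tendsto m hm s)).mul
      (WW_tendsto m hm))
  rw [show Complex.Gamma s * ((m : ℂ) ^ (-s) * 1 *
      ((m : ℂ) * ∏ k ∈ Finset.range m, Complex.Gamma (((1 : ℂ) + (k : ℂ)) / m))) =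
    Complex.Gamma s * ((m : ℂ) ^ (-s) *
      ((m : ℂ) * ∏ k ∈ Finset.range m, Complex.Gamma (((1 : ℂ) + (k : ℂ)) / m))) by ring] at h
  refine h.congr' ?_
  filter_upwards [ev_id m hm s hs] with n hid
  rw [hid]

lemma P0_eq (m : ℕ) (hm : 1 ≤ m) :
    ∏ k ∈ Finset.range m, Complex.Gamma (((1 : ℂ) + (k : ℂ)) / m) =
      ((Real.sqrt ((2 * π) ^ (m - 1) / m) : ℝ) : ℂ) := by
  rw [← gamma_prod m hm, Complex.ofReal_prod]
  refine Finset.prod_congr rfl fun k _ => ?_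
  rw [show ((1 : ℂ) + (k : ℂ)) / m = (((1 + (k : ℝ)) / m : ℝ) : ℂ) by push_cast; ring]
  exact Complex.Gamma_ofReal _

lemma real_const_eq (m : ℕ) (hm : 1 ≤ m) :
    (m : ℝ) ^ (-(1/2) : ℝ) * (2 * π) ^ ((1 - (m : ℝ)) / 2) * m *
      Real.sqrt ((2 * π) ^ (m - 1) / m) = 1 := by
  have hm0 : (0 : ℝ) < m := by exact_mod_cast hm
  have h2π : (0 : ℝ) < 2 * π := by positivity
  rw [Real.sqrt_div (by positivity) _, Real.sqrt_eq_rpow ((2*π)^(m-1)),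
    Real.sqrt_eq_rpow (m : ℝ), ← Real.rpow_natCast (2*π) (m-1), ← Real.rpow_mul h2π.le,
    Nat.cast_sub hm, Nat.cast_one]
  rw [show ((m : ℝ) ^ (-(1/2) : ℝ) * (2 * π) ^ ((1 - (m : ℝ)) / 2) * m *
      ((2*π) ^ (((m:ℝ) - 1) * (1/2)) / (m:ℝ) ^ ((1:ℝ)/2))) =
    ((m : ℝ) ^ (-(1/2) : ℝ) * m / (m:ℝ) ^ ((1:ℝ)/2)) *
      ((2 * π) ^ ((1 - (m : ℝ)) / 2) * (2*π) ^ (((m:ℝ) - 1) * (1/2))) by ring]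
  rw [← Real.rpow_add h2π, show ((1 - (m : ℝ)) / 2 + ((m:ℝ) - 1) * (1/2)) = 0 by ring,
    Real.rpow_zero, mul_one]
  have key : (m:ℝ) ^ (-(1/2):ℝ) * (m:ℝ) ^ (1:ℝ) = (m:ℝ) ^ ((1:ℝ)/2) := by
    rw [← Real.rpow_add hm0]; norm_num
  rw [Real.rpow_one] at key
  rw [div_eq_one_iff_eq (ne_of_gt (Real.rpow_pos_of_pos hm0 _))]
  exact key


open Real in
theorem gauss_legendre_multiplication (m : ℕ) (hm : 1 ≤ m) (s : ℂ)
    (hs : ∀ n : ℕ, s ≠ -(n : ℂ)) :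
    Complex.Gamma s =
      (m : ℂ) ^ (s - 1 / 2) * ((2 * (π : ℂ)) ^ ((1 - (m : ℂ)) / 2)) *
        ∏ k ∈ Finset.range m, Complex.Gamma ((s + (k : ℂ)) / (m : ℂ)) := by
  have hmc : (m : ℂ) ≠ 0 := Nat.cast_ne_zero.mpr (by omega)
  rw [prod_gamma m hm s hs, P0_eq m hm]
  have e1 : (m : ℂ) ^ (s - 1/2) * (m : ℂ) ^ (-s) = (m : ℂ) ^ (-(1/2) : ℂ) := by
    rw [← Complex.cpow_add _ _ hmc, show s - 1/2 + -s = -(1/2 : ℂ) by ring]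
  have e2 : (m : ℂ) ^ (-(1/2) : ℂ) = (((m : ℝ) ^ (-(1/2) : ℝ) : ℝ) : ℂ) := by
    rw [Complex.ofReal_cpow (Nat.cast_nonneg m)]
    push_cast
    norm_num
  have e3 : (2 * (π : ℂ)) ^ ((1 - (m : ℂ)) / 2) =
      (((2 * π : ℝ) ^ (((1 - (m : ℝ)) / 2) : ℝ) : ℝ) : ℂ) := by
    rw [Complex.ofReal_cpow (by positivity)]
    push_cast
    ring_nf
  have hC' := real_const_eq m hm
  have hC1 : (m : ℂ) ^ (s - 1/2) * (2 * (π : ℂ)) ^ ((1 - (m : ℂ)) / 2) *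
      ((m : ℂ) ^ (-s) * ((m : ℂ) * ((Real.sqrt ((2 * π) ^ (m - 1) / m) : ℝ) : ℂ))) = 1 := by
    rw [e3, show (m : ℂ) ^ (s - 1/2) * (((2 * π : ℝ) ^ (((1 - (m : ℝ)) / 2) : ℝ) : ℝ) : ℂ) *
        ((m : ℂ) ^ (-s) * ((m : ℂ) * ((Real.sqrt ((2 * π) ^ (m - 1) / m) : ℝ) : ℂ))) =
      ((m : ℂ) ^ (s - 1/2) * (m : ℂ) ^ (-s)) * (((2 * π : ℝ) ^ (((1 - (m : ℝ)) / 2) : ℝ) : ℝ) : ℂ) *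
        (m : ℂ) * ((Real.sqrt ((2 * π) ^ (m - 1) / m) : ℝ) : ℂ) by ring, e1, e2]
    exact_mod_cast hC'
  linear_combination (-(Complex.Gamma s)) * hC1
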